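/- Let m₁ ≤ m₂ be natural numbers. For each s with 0 ≤ s ≤ m₂ − m₁ let E_s be the m₁ × m₂ complex matrix whose (i, j) entry is 1 if j = i + s and 0 otherwise. Then for any scalars c₀, c₁, …, c_{m₂−m₁} ∈ ℂ, not all zero, the matrix Σ_{s=0}^{m₂−m₁} c_s·E_s has rank m₁ (full rank). -/
import Mathlib


/-- The shift matrices `E_s` with `(i,j)` entry `1` if `j = i + s` and `0` otherwise. -/
def shiftMatrix (m₁ m₂ s : ℕ) : Matrix (Fin m₁) (Fin m₂) ℂ :=
  Matrix.of fun i j => if (j : ℕ) = (i : ℕ) + s then 1 else 0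

theorem stmt_16 (m₁ m₂ : ℕ) (h : m₁ ≤ m₂)
    (c : Fin (m₂ - m₁ + 1) → ℂ) (hc : c ≠ 0) :
    (∑ s : Fin (m₂ - m₁ + 1), c s • shiftMatrix m₁ m₂ (s : ℕ)).rank = m₁ := by
  set M := ∑ s : Fin (m₂ - m₁ + 1), c s • shiftMatrix m₁ m₂ (s : ℕ) with hM
  -- choose minimal index with nonzero coefficient
  have hne : ∃ s, c s ≠ 0 := by
    by_contra hcon
    push_neg at hcon
    exact hc (funext hcon)
  classical
  set T : Finset (Fin (m₂ - m₁ + 1)) := Finset.univ.filter (fun s => c s ≠ 0) with hT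
  have hTne : T.Nonempty := by
    obtain ⟨s, hs⟩ := hne
    exact ⟨s, by simp [hT, hs]⟩
  set s₀ : Fin (m₂ - m₁ + 1) := T.min' hTne with hs₀
  have hcs₀ : c s₀ ≠ 0 := by
    have := T.min'_mem hTne
    simpa [hT] using this
  have hmin : ∀ s, s < s₀ → c s = 0 := by
    intro s hs
    by_contra hcs
    exact absurd (T.min'_le s (by simp [hT, hcs])) (not_le.mpr hs)
  -- column selection map
  have hb : ∀ i : Fin m₁, (i : ℕ) + (s₀ : ℕ) < m₂ := by
    intro i
    have h1 : (i : ℕ) < m₁ := i.isLt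
    have h2 : (s₀ : ℕ) < m₂ - m₁ + 1 := s₀.isLt
    omega
  set f : Fin m₁ → Fin m₂ := fun i => ⟨(i : ℕ) + (s₀ : ℕ), hb i⟩ with hf
  set B : Matrix (Fin m₁) (Fin m₁) ℂ := M.submatrix id f with hB
  have hMentry : ∀ (i : Fin m₁) (j : Fin m₂),
      M i j = ∑ s : Fin (m₂ - m₁ + 1), c s * (if (j : ℕ) = (i : ℕ) + s then 1 else 0) := by
    intro i j
    simp [hM, shiftMatrix, Matrix.sum_apply]
  -- B is upper triangular with diagonal c s₀
  have hdiag : ∀ i : Fin m₁, B i i = c s₀ := by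
    intro i
    rw [hB]
    simp only [Matrix.submatrix_apply, id_eq]
    rw [hMentry]
    rw [Finset.sum_eq_single s₀]
    · simp [hf]
    · intro s _ hs
      have : ¬ ((f i : ℕ) = (i : ℕ) + s) := by
        simp only [hf]
        intro hcontra
        apply hs
        apply Fin.ext
        omega
      simp [this]
    · intro habs
      exact absurd (Finset.mem_univ s₀) habs
  have hlt : ∀ i k : Fin m₁, k < i → B i k = 0 := by
    intro i k hik
    rw [hB]
    simp only [Matrix.submatrix_apply, id_eq]
    rw [hMentry]
    apply Finset.sum_eq_zero
    intro s _
    by_cases hcond : (f k : ℕ) = (i : ℕ) + s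
    · have hklti : (k : ℕ) < (i : ℕ) := hik
      have hslt : s < s₀ := by
        simp only [hf] at hcond
        have : (s : ℕ) < (s₀ : ℕ) := by omega
        exact this
      simp [hmin s hslt]
    · simp [hcond]
  -- det B ≠ 0
  have hdet : B.det = (c s₀) ^ m₁ := by
    rw [Matrix.det_of_upperTriangular]
    · simp [hdiag]
    · intro i j hij
      exact hlt i j hij
  have hdetne : B.det ≠ 0 := by
    rw [hdet]
    exact pow_ne_zero _ hcs₀
  have hBunit : IsUnit B := (Matrix.isUnit_iff_isUnit_det B).mpr (Ne.isUnit hdetne)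
  have hBrank : B.rank = m₁ := by
    rw [Matrix.rank_of_isUnit B hBunit]
    simp
  -- B = M * P so rank B ≤ rank M
  have hBMul : B = M * (1 : Matrix (Fin m₂) (Fin m₂) ℂ).submatrix (Equiv.refl (Fin m₂)) f := by
    rw [Matrix.mul_submatrix_one]
    rfl
  have hle1 : B.rank ≤ M.rank := by
    rw [hBMul]
    exact Matrix.rank_mul_le_left _ _
  have hle2 : M.rank ≤ m₁ := Matrix.rank_le_height M
  omega
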